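/- For all integers n ≥ 1 and 0 ≤ k with 2k ≤ n, the partial sum of binomial coefficients satisfies ∑_{i=0}^{k} C(n, i) ≤ 2^{n·H(k/n)}, where H is the binary entropy function. -/

import Mathlib

/-- The binary entropy function `H(p) = -p log₂ p - (1-p) log₂ (1-p)`
(with `H(0) = H(1) = 0`, using the convention `logb 2 0 = 0`). -/
noncomputable def binEntropy (p : ℝ) : ℝ :=
  -(p * Real.logb 2 p) - (1 - p) * Real.logb 2 (1 - p)

/-- For `0 ≤ k` with `2k ≤ n`, `∑_{i=0}^{k} C(n,i) ≤ 2^{n H(k/n)}`. -/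
theorem sum_choose_le_entropy_bound (n k : ℕ) (hn : 1 ≤ n) (hk : 2 * k ≤ n) :
    ∑ i ∈ Finset.range (k + 1), (n.choose i : ℝ) ≤
      (2 : ℝ) ^ ((n : ℝ) * binEntropy ((k : ℝ) / n)) := by
  have hnR : (0:ℝ) < n := by exact_mod_cast hn
  rcases Nat.eq_zero_or_pos k with rfl | hk1
  · simp [binEntropy]
  have hkn : k ≤ n := le_trans (Nat.le_mul_of_pos_left k (by norm_num)) hk
  set p : ℝ := (k : ℝ) / n with hpdef
  have hp0 : 0 < p := by positivity
  have hp2 : p ≤ 1 - p := by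
    have h2 : (2:ℝ) * k ≤ n := by exact_mod_cast hk
    have : p ≤ 1 / 2 := by rw [hpdef, div_le_div_iff₀ hnR (by norm_num)]; linarith
    linarith
  have hq0 : 0 < 1 - p := lt_of_lt_of_le hp0 hp2
  -- key: partial binomial sum ≤ 1
  have hfull : ∑ i ∈ Finset.range (n + 1),
      (n.choose i : ℝ) * p ^ i * (1 - p) ^ (n - i) = 1 := by
    have h := add_pow p (1 - p) n
    simp only [add_sub_cancel, one_pow] at h
    calc ∑ i ∈ Finset.range (n + 1), (n.choose i : ℝ) * p ^ i * (1 - p) ^ (n - i)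
        = ∑ i ∈ Finset.range (n + 1), p ^ i * (1 - p) ^ (n - i) * (n.choose i : ℝ) := by
          apply Finset.sum_congr rfl; intro i _; ring
      _ = 1 := h.symm
  have hpart : ∑ i ∈ Finset.range (k + 1),
      (n.choose i : ℝ) * p ^ i * (1 - p) ^ (n - i) ≤ 1 := by
    calc ∑ i ∈ Finset.range (k + 1), (n.choose i : ℝ) * p ^ i * (1 - p) ^ (n - i)
        ≤ ∑ i ∈ Finset.range (n + 1), (n.choose i : ℝ) * p ^ i * (1 - p) ^ (n - i) := by
          apply Finset.sum_le_sum_of_subset_of_nonneg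
          · exact Finset.range_subset_range.mpr (by omega)
          · intro i _ _; positivity
      _ = 1 := hfull
  set c : ℝ := p ^ k * (1 - p) ^ (n - k) with hcdef
  have hc0 : 0 < c := by positivity
  have hterm : ∀ i ∈ Finset.range (k + 1),
      (n.choose i : ℝ) * c ≤ (n.choose i : ℝ) * p ^ i * (1 - p) ^ (n - i) := by
    intro i hi
    rw [Finset.mem_range] at hi
    have hik : i ≤ k := by omega
    have e1 : p ^ k = p ^ i * p ^ (k - i) := by
      rw [← pow_add]; congr 1; omega
    have e2 : (1 - p) ^ (n - i) = (1 - p) ^ (k - i) * (1 - p) ^ (n - k) := by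
      rw [← pow_add]; congr 1; omega
    have e3 : p ^ (k - i) ≤ (1 - p) ^ (k - i) := pow_le_pow_left₀ hp0.le hp2 _
    have hnn : (0:ℝ) ≤ (n.choose i : ℝ) := by positivity
    rw [hcdef, e1, e2]
    have := mul_le_mul_of_nonneg_left e3 (by positivity :
        (0:ℝ) ≤ (n.choose i : ℝ) * p ^ i * (1 - p) ^ (n - k))
    nlinarith [pow_nonneg hp0.le i, pow_nonneg hq0.le (n - k), pow_nonneg hq0.le (k - i)]
  have hsum : (∑ i ∈ Finset.range (k + 1), (n.choose i : ℝ)) * c ≤ 1 := by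
    rw [Finset.sum_mul]
    exact le_trans (Finset.sum_le_sum hterm) hpart
  have hmain : ∑ i ∈ Finset.range (k + 1), (n.choose i : ℝ) ≤ c⁻¹ := by
    have h := (le_div_iff₀ hc0).mpr hsum
    rwa [one_div] at h
  -- now identify RHS with c⁻¹
  have hrhs : (2 : ℝ) ^ ((n : ℝ) * binEntropy p) = c⁻¹ := by
    have hnp : (n : ℝ) * p = k := by rw [hpdef]; field_simp
    have hnq : (n : ℝ) * (1 - p) = ((n - k : ℕ) : ℝ) := by
      push_cast [hkn]; rw [hpdef]; field_simp
    have hexp : (n : ℝ) * binEntropy p =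
        -(((k:ℕ):ℝ) * Real.logb 2 p + ((n - k : ℕ):ℝ) * Real.logb 2 (1 - p)) := by
      unfold binEntropy
      rw [← hnp, ← hnq]; ring
    rw [hexp, Real.rpow_neg (by norm_num), Real.rpow_add (by norm_num)]
    have e1 : (2:ℝ) ^ (((k:ℕ):ℝ) * Real.logb 2 p) = p ^ k := by
      rw [mul_comm, Real.rpow_mul (by norm_num), Real.rpow_logb (by norm_num) (by norm_num) hp0,
        Real.rpow_natCast]
    have e2 : (2:ℝ) ^ (((n - k:ℕ):ℝ) * Real.logb 2 (1 - p)) = (1 - p) ^ (n - k) := by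
      rw [mul_comm, Real.rpow_mul (by norm_num), Real.rpow_logb (by norm_num) (by norm_num) hq0,
        Real.rpow_natCast]
    rw [e1, e2]
  rw [hrhs]
  exact hmain
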